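/- arXiv:2411.19236 — 4 statements merged into one kernel-verified Lean document; each statement's English description precedes it below -/
import Mathlib

section
/- Let 0 < r_a < r_s be real numbers, let φ ∈ (0, π), and let d be such that the quantity c := (r_s² + r_a² − d²)/(2·r_s·r_a·sin(φ)) satisfies 0 ≤ c < 1. Then the Lebesgue measure of the set {ω ∈ [0, 2π) : r_s² − 2·r_s·r_a·sin(ω)·sin(φ) + r_a² ≤ d²} equals 2·arcsin(sqrt(1 − cos²(ζ(d))/sin²(φ))), where ζ(d) = arccos((r_s² + r_a² − d²)/(2·r_s·r_a)), i.e., cos(ζ(d)) = (r_s² + r_a² − d²)/(2·r_s·r_a). -/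
open Real Set

/-- The Lebesgue measure of the set of argument angles `ω ∈ [0, 2π)` for which the
satellite on the orbit of radius `r_s` with inclination `φ` is within distance `d`
of `A = (0,0,r_a)` equals `2 arcsin (sqrt (1 − cos²(ζ(d))/sin²(φ)))`, where
`ζ(d) = arccos((r_s² + r_a² − d²)/(2 r_s r_a))`. -/
theorem arc_measure_in_cap (r_a r_s d φ : ℝ) (h0 : 0 < r_a) (h1 : r_a < r_s)
    (hφ : φ ∈ Set.Ioo 0 Real.pi)
    (hc0 : 0 ≤ (r_s ^ 2 + r_a ^ 2 - d ^ 2) / (2 * r_s * r_a * Real.sin φ))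
    (hc1 : (r_s ^ 2 + r_a ^ 2 - d ^ 2) / (2 * r_s * r_a * Real.sin φ) < 1) :
    MeasureTheory.volume {ω : ℝ | ω ∈ Set.Ico 0 (2 * Real.pi) ∧
        r_s ^ 2 - 2 * r_s * r_a * Real.sin ω * Real.sin φ + r_a ^ 2 ≤ d ^ 2}
      = ENNReal.ofReal (2 * Real.arcsin (Real.sqrt (1 -
          Real.cos (Real.arccos ((r_s ^ 2 + r_a ^ 2 - d ^ 2) / (2 * r_s * r_a))) ^ 2
            / Real.sin φ ^ 2))) := by
  obtain ⟨hφ0, hφπ⟩ := hφ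
  have hsφ : 0 < Real.sin φ := Real.sin_pos_of_pos_of_lt_pi hφ0 hφπ
  have hrs : 0 < r_s := h0.trans h1
  have hden : 0 < 2 * r_s * r_a * Real.sin φ := by positivity
  set c := (r_s ^ 2 + r_a ^ 2 - d ^ 2) / (2 * r_s * r_a * Real.sin φ) with hcdef
  have hsφ1 : Real.sin φ ≤ 1 := Real.sin_le_one φ
  have hπ := Real.pi_pos
  have hx : (r_s ^ 2 + r_a ^ 2 - d ^ 2) / (2 * r_s * r_a) = c * Real.sin φ := by
    rw [hcdef]; field_simp
  have hxge : (0:ℝ) ≤ c * Real.sin φ := mul_nonneg hc0 hsφ.le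
  have hxle : c * Real.sin φ ≤ 1 := by
    calc c * Real.sin φ ≤ 1 * 1 := mul_le_mul hc1.le hsφ1 hsφ.le zero_le_one
    _ = 1 := one_mul 1
  have hcos : Real.cos (Real.arccos ((r_s ^ 2 + r_a ^ 2 - d ^ 2) / (2 * r_s * r_a)))
      = c * Real.sin φ := by rw [hx, Real.cos_arccos (by linarith) hxle]
  have hsq : (c * Real.sin φ) ^ 2 / Real.sin φ ^ 2 = c ^ 2 := by
    field_simp
  set a := Real.arcsin c with hadef
  have ha0 : 0 ≤ a := Real.arcsin_nonneg.mpr hc0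
  have ha2 : a ≤ π / 2 := Real.arcsin_le_pi_div_two c
  have hsina : Real.sin a = c := Real.sin_arcsin (by linarith) hc1.le
  have hRHS : Real.arcsin (Real.sqrt (1 - (c * Real.sin φ) ^ 2 / Real.sin φ ^ 2))
      = π / 2 - a := by
    rw [hsq]
    have h2 : Real.sqrt (1 - c ^ 2) = Real.sin (π / 2 - a) := by
      rw [Real.sin_pi_div_two_sub, hadef, Real.cos_arcsin]
    rw [h2, Real.arcsin_sin (by linarith) (by linarith)]
  have key : ∀ ω : ℝ, 0 ≤ ω → ω ≤ π → (c ≤ Real.sin ω ↔ (a ≤ ω ∧ ω ≤ π - a)) := by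
    intro ω hω0 hωπ
    by_cases hh : ω ≤ π / 2
    · rw [← Real.arcsin_le_iff_le_sin ⟨by linarith, hc1.le⟩ ⟨by linarith, hh⟩]
      constructor
      · intro h; exact ⟨h, by linarith⟩
      · intro h; exact h.1
    · push_neg at hh
      have hsin : Real.sin ω = Real.sin (π - ω) := (Real.sin_pi_sub ω).symm
      rw [hsin, ← Real.arcsin_le_iff_le_sin ⟨by linarith, hc1.le⟩ ⟨by linarith, by linarith⟩]
      constructor
      · intro h; exact ⟨by linarith, by linarith⟩
      · intro h; linarith [h.2]
  have hset : {ω : ℝ | ω ∈ Set.Ico 0 (2 * Real.pi) ∧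
        r_s ^ 2 - 2 * r_s * r_a * Real.sin ω * Real.sin φ + r_a ^ 2 ≤ d ^ 2}
      = Set.Icc a (π - a) := by
    ext ω
    simp only [Set.mem_setOf_eq, Set.mem_Ico, Set.mem_Icc]
    constructor
    · rintro ⟨⟨hω0, hω2⟩, hle⟩
      have hsin : c ≤ Real.sin ω := by
        rw [hcdef, div_le_iff₀ hden]; nlinarith
      have hωπ : ω ≤ π := by
        by_contra h
        push_neg at h
        have h3 : 0 < Real.sin (ω - π) :=
          Real.sin_pos_of_pos_of_lt_pi (by linarith) (by linarith)
        rw [Real.sin_sub_pi] at h3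
        linarith
      exact (key ω hω0 hωπ).mp hsin
    · rintro ⟨h1', h2'⟩
      have hω0 : 0 ≤ ω := le_trans ha0 h1'
      have hωπ : ω ≤ π := by linarith
      have hsin : c ≤ Real.sin ω := (key ω hω0 hωπ).mpr ⟨h1', h2'⟩
      refine ⟨⟨hω0, by linarith⟩, ?_⟩
      rw [hcdef, div_le_iff₀ hden] at hsin
      nlinarith
  rw [hset, Real.volume_Icc, hcos, hRHS]
  congr 1
  ring
end

section
/- Let λ > 0, φ̄ ∈ (0, π/2], ν ≥ 0, and t ≥ 0. Then, as μ → ∞, exp(−λ·∫_{0}^{φ̄} cos(φ)·(1 − exp(−(μ/(2π))·(ν·t + 2·arcsin(sqrt(1 − cos²(φ̄)/cos²(φ)))))) dφ) converges to exp(−λ·sin(φ̄)). -/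
open Filter MeasureTheory Real

/-- As the mean number of satellites per orbit `μ` tends to infinity, the delay CCDF of
Theorem 6 converges to `exp (−λ sin φ̄)`. -/
theorem delay_ccdf_limit (lam φb ν t : ℝ) (hlam : 0 < lam)
    (hφb : φb ∈ Set.Ioc 0 (Real.pi / 2)) (hν : 0 ≤ ν) (ht : 0 ≤ t) :
    Filter.Tendsto (fun μ : ℝ =>
        Real.exp (-lam * ∫ φ in (0:ℝ)..φb, Real.cos φ *
          (1 - Real.exp (-(μ / (2 * Real.pi)) * (ν * t +
            2 * Real.arcsin (Real.sqrt (1 - Real.cos φb ^ 2 / Real.cos φ ^ 2)))))))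
      Filter.atTop (nhds (Real.exp (-lam * Real.sin φb))) := by
  obtain ⟨hφb0, hφb2⟩ := hφb
  have hπ := Real.pi_pos
  set a : ℝ → ℝ := fun φ => ν * t +
      2 * Real.arcsin (Real.sqrt (1 - Real.cos φb ^ 2 / Real.cos φ ^ 2)) with ha_def
  have ha_nonneg : ∀ φ, 0 ≤ a φ := by
    intro φ
    have h1 : 0 ≤ Real.arcsin (Real.sqrt (1 - Real.cos φb ^ 2 / Real.cos φ ^ 2)) :=
      Real.arcsin_nonneg.2 (Real.sqrt_nonneg _)
    have := mul_nonneg hν ht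
    positivity
  -- the integral tends to sin φb
  have hInt : Filter.Tendsto (fun μ : ℝ => ∫ φ in (0:ℝ)..φb,
      Real.cos φ * (1 - Real.exp (-(μ / (2 * Real.pi)) * a φ)))
      Filter.atTop (nhds (Real.sin φb)) := by
    have key : Filter.Tendsto (fun μ : ℝ => ∫ φ in (0:ℝ)..φb,
        Real.cos φ * (1 - Real.exp (-(μ / (2 * Real.pi)) * a φ)))
        Filter.atTop (nhds (∫ φ in (0:ℝ)..φb, Real.cos φ)) := by
      apply intervalIntegral.tendsto_integral_filter_of_dominated_convergence (fun _ => 1)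
      · filter_upwards with μ
        have hm : Measurable fun φ : ℝ =>
            Real.cos φ * (1 - Real.exp (-(μ / (2 * Real.pi)) * a φ)) := by
          apply Real.measurable_cos.mul
          apply Measurable.const_sub
          apply Real.measurable_exp.comp
          apply Measurable.const_mul
          apply Measurable.const_add
          apply Measurable.const_mul
          exact Real.measurable_arcsin.comp
            ((measurable_const.div (Real.measurable_cos.pow_const 2)).const_sub 1).sqrt
        exact hm.aestronglyMeasurable
      · filter_upwards [eventually_ge_atTop (0:ℝ)] with μ hμ
        filter_upwards with φ _
        have hz : -(μ / (2 * Real.pi)) * a φ ≤ 0 := by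
          exact mul_nonpos_of_nonpos_of_nonneg
            (neg_nonpos.2 (by positivity)) (ha_nonneg φ)
        have he1 : Real.exp (-(μ / (2 * Real.pi)) * a φ) ≤ 1 := Real.exp_le_one_iff.2 hz
        have he0 : 0 < Real.exp (-(μ / (2 * Real.pi)) * a φ) := Real.exp_pos _
        have hc : |Real.cos φ| ≤ 1 := Real.abs_cos_le_one φ
        rw [Real.norm_eq_abs, abs_mul]
        have h3 : |1 - Real.exp (-(μ / (2 * Real.pi)) * a φ)| ≤ 1 := by
          rw [abs_le]; constructor <;> linarith
        calc |Real.cos φ| * |1 - Real.exp (-(μ / (2 * Real.pi)) * a φ)|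
            ≤ 1 * 1 := by
              exact mul_le_mul hc h3 (abs_nonneg _) zero_le_one
          _ = 1 := one_mul 1
      · exact intervalIntegrable_const
      · have hne : ∀ᵐ φ : ℝ, φ ≠ φb := by
          refine (MeasureTheory.ae_iff).2 ?_
          have : {x : ℝ | ¬ x ≠ φb} = {φb} := by ext x; simp
          rw [this]; exact Real.volume_singleton
        filter_upwards [hne] with φ hφne hφmem
        rw [Set.uIoc_of_le hφb0.le] at hφmem
        obtain ⟨hφ0, hφle⟩ := hφmem
        have hφlt : φ < φb := lt_of_le_of_ne hφle hφne
        -- a φ > 0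
        have hcosφ : 0 < Real.cos φ := Real.cos_pos_of_mem_Ioo
          ⟨by linarith, by linarith⟩
        have hcoslt : Real.cos φb < Real.cos φ :=
          Real.cos_lt_cos_of_nonneg_of_le_pi hφ0.le (by linarith) hφlt
        have hcosb : 0 ≤ Real.cos φb := Real.cos_nonneg_of_mem_Icc
          ⟨by linarith, hφb2⟩
        have hsq : Real.cos φb ^ 2 < Real.cos φ ^ 2 := by nlinarith
        have hratio : Real.cos φb ^ 2 / Real.cos φ ^ 2 < 1 :=
          (div_lt_one (by positivity)).2 hsq
        have hpos : 0 < 1 - Real.cos φb ^ 2 / Real.cos φ ^ 2 := by linarith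
        have hsqrt : 0 < Real.sqrt (1 - Real.cos φb ^ 2 / Real.cos φ ^ 2) :=
          Real.sqrt_pos.2 hpos
        have hsqrt1 : Real.sqrt (1 - Real.cos φb ^ 2 / Real.cos φ ^ 2) ≤ 1 := by
          rw [show (1:ℝ) = Real.sqrt 1 by simp]
          exact Real.sqrt_le_sqrt (by
            have : 0 ≤ Real.cos φb ^ 2 / Real.cos φ ^ 2 := by positivity
            simp only [Real.sqrt_one]
            linarith)
        have harc : 0 < Real.arcsin (Real.sqrt (1 - Real.cos φb ^ 2 / Real.cos φ ^ 2)) :=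
          Real.arcsin_pos.2 hsqrt
        have hapos : 0 < a φ := by
          have := mul_nonneg hν ht
          simp only [ha_def]
          linarith
        -- exponent tends to -∞
        have hbot : Filter.Tendsto (fun μ : ℝ => -(μ / (2 * Real.pi)) * a φ)
            Filter.atTop Filter.atBot := by
          have : (fun μ : ℝ => -(μ / (2 * Real.pi)) * a φ)
              = fun μ : ℝ => μ * (-(a φ / (2 * Real.pi))) := by
            funext μ; ring
          rw [this]
          exact Filter.Tendsto.atTop_mul_const_of_neg
            (by
              have h4 : 0 < a φ / (2 * Real.pi) := by positivity
              linarith)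
            Filter.tendsto_id
        have hexp0 : Filter.Tendsto
            (fun μ : ℝ => Real.exp (-(μ / (2 * Real.pi)) * a φ))
            Filter.atTop (nhds 0) := Real.tendsto_exp_atBot.comp hbot
        have := (tendsto_const_nhds (x := (1:ℝ)) (f := Filter.atTop (α := ℝ))).sub hexp0
        have := (tendsto_const_nhds (x := Real.cos φ) (f := Filter.atTop (α := ℝ))).mul this
        simpa using this
    have : (∫ φ in (0:ℝ)..φb, Real.cos φ) = Real.sin φb := by
      simp
    rwa [this] at key
  have hmain := (Real.continuous_exp.tendsto _).comp (hInt.const_mul (-lam))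
  simpa [Function.comp_def, ha_def, mul_comm] using hmain
end

section
/- Let λ > 0 and μ > 0. The function F : [0, π/2] → ℝ defined by F(a) = 1 − exp(−λ·∫_{0}^{a} cos(φ)·(1 − exp(−(μ/π)·arcsin(sqrt(1 − cos²(a)/cos²(φ))))) dφ) is strictly increasing on [0, π/2]. -/
open Real intervalIntegral Set

noncomputable def gFun (μ b φ : ℝ) : ℝ :=
  Real.cos φ * (1 - Real.exp (-(μ / Real.pi) *
    Real.arcsin (Real.sqrt (1 - Real.cos b ^ 2 / Real.cos φ ^ 2))))

lemma g_contOn (μ : ℝ) {b : ℝ} (hb0 : 0 ≤ b) (hb : b ≤ Real.pi / 2) :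
    ContinuousOn (gFun μ b) (Set.Icc 0 b) := by
  rcases lt_or_eq_of_le hb with hb' | hb'
  · apply ContinuousOn.mul Real.continuous_cos.continuousOn
    apply ContinuousOn.sub continuousOn_const
    apply Real.continuous_exp.comp_continuousOn
    apply ContinuousOn.mul continuousOn_const
    apply Real.continuous_arcsin.comp_continuousOn
    apply Real.continuous_sqrt.comp_continuousOn
    apply ContinuousOn.sub continuousOn_const
    apply ContinuousOn.div continuousOn_const
      (Real.continuous_cos.pow 2).continuousOn
    intro x hx
    have hcos : 0 < Real.cos x := by
      apply Real.cos_pos_of_mem_Ioo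
      constructor
      · linarith [Real.pi_pos, hx.1]
      · exact lt_of_le_of_lt hx.2 hb'
    exact pow_ne_zero 2 hcos.ne'
  · have : gFun μ b = fun φ =>
        Real.cos φ * (1 - Real.exp (-(μ / Real.pi) * (Real.pi / 2))) := by
      funext φ
      simp [gFun, hb', Real.cos_pi_div_two, Real.arcsin_one]
    rw [this]
    exact (Real.continuous_cos.mul continuous_const).continuousOn

/-- The connectivity probability of Theorem 2, viewed as a function of the cap angle,
is strictly increasing on `[0, π/2]`. -/
theorem connectivity_strictMono (lam μ : ℝ) (hlam : 0 < lam) (hμ : 0 < μ) :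
    StrictMonoOn (fun a : ℝ =>
        1 - Real.exp (-lam * ∫ φ in (0:ℝ)..a, Real.cos φ *
          (1 - Real.exp (-(μ / Real.pi) *
            Real.arcsin (Real.sqrt (1 - Real.cos a ^ 2 / Real.cos φ ^ 2))))))
      (Set.Icc 0 (Real.pi / 2)) := by
  have hμπ : 0 < μ / Real.pi := div_pos hμ Real.pi_pos
  intro a ha b hb hab
  have ha0 : (0:ℝ) ≤ a := ha.1
  have hb0 : (0:ℝ) ≤ b := hb.1
  have hbπ : b ≤ Real.pi / 2 := hb.2
  have haπ : a < Real.pi / 2 := lt_of_lt_of_le hab hbπ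
  -- integrability
  have intb : IntervalIntegrable (gFun μ b) MeasureTheory.volume 0 b :=
    (g_contOn μ hb0 hbπ).intervalIntegrable_of_Icc hb0
  have intb1 : IntervalIntegrable (gFun μ b) MeasureTheory.volume 0 a :=
    intb.mono_set (by rw [Set.uIcc_of_le ha0, Set.uIcc_of_le hb0]; exact Set.Icc_subset_Icc le_rfl hab.le)
  have intb2 : IntervalIntegrable (gFun μ b) MeasureTheory.volume a b :=
    intb.mono_set (by rw [Set.uIcc_of_le hab.le, Set.uIcc_of_le hb0]; exact Set.Icc_subset_Icc ha0 le_rfl)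
  have inta : IntervalIntegrable (gFun μ a) MeasureTheory.volume 0 a :=
    (g_contOn μ ha0 haπ.le).intervalIntegrable_of_Icc ha0
  -- pointwise monotonicity on [0, a]
  have hmono : ∀ φ ∈ Set.Icc 0 a, gFun μ a φ ≤ gFun μ b φ := by
    intro φ hφ
    have hφπ : φ < Real.pi / 2 := lt_of_le_of_lt hφ.2 haπ
    have hcosφ : 0 < Real.cos φ := by
      apply Real.cos_pos_of_mem_Ioo
      exact ⟨by linarith [Real.pi_pos, hφ.1], hφπ⟩
    have hcosb0 : 0 ≤ Real.cos b := by
      apply Real.cos_nonneg_of_mem_Icc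
      constructor <;> linarith [Real.pi_pos]
    have hcosab : Real.cos b ≤ Real.cos a := by
      apply Real.cos_le_cos_of_nonneg_of_le_pi ha0 (by linarith [Real.pi_pos]) hab.le
    have hsq : Real.cos b ^ 2 ≤ Real.cos a ^ 2 := by nlinarith
    unfold gFun
    have key : Real.arcsin (Real.sqrt (1 - Real.cos a ^ 2 / Real.cos φ ^ 2)) ≤
        Real.arcsin (Real.sqrt (1 - Real.cos b ^ 2 / Real.cos φ ^ 2)) := by
      apply Real.monotone_arcsin
      apply Real.sqrt_le_sqrt
      have : Real.cos b ^ 2 / Real.cos φ ^ 2 ≤ Real.cos a ^ 2 / Real.cos φ ^ 2 := by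
        apply div_le_div_of_nonneg_right hsq (by positivity)
      linarith
    have hexp : Real.exp (-(μ / Real.pi) *
        Real.arcsin (Real.sqrt (1 - Real.cos b ^ 2 / Real.cos φ ^ 2))) ≤
        Real.exp (-(μ / Real.pi) *
        Real.arcsin (Real.sqrt (1 - Real.cos a ^ 2 / Real.cos φ ^ 2))) := by
      apply Real.exp_le_exp.2
      nlinarith
    nlinarith [Real.exp_pos (-(μ / Real.pi) *
        Real.arcsin (Real.sqrt (1 - Real.cos b ^ 2 / Real.cos φ ^ 2)))]
  have step1 : (∫ φ in (0:ℝ)..a, gFun μ a φ) ≤ ∫ φ in (0:ℝ)..a, gFun μ b φ :=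
    intervalIntegral.integral_mono_on ha0 inta intb1 hmono
  -- positivity on (a, b)
  have step3 : 0 < ∫ φ in a..b, gFun μ b φ := by
    apply intervalIntegral.intervalIntegral_pos_of_pos_on intb2 _ hab
    intro φ hφ
    have hcosφ : 0 < Real.cos φ := by
      apply Real.cos_pos_of_mem_Ioo
      exact ⟨by linarith [Real.pi_pos, hφ.1], lt_of_lt_of_le hφ.2 hbπ⟩
    have hcosb0 : 0 ≤ Real.cos b := by
      apply Real.cos_nonneg_of_mem_Icc
      constructor <;> linarith [Real.pi_pos]
    have hcoslt : Real.cos b < Real.cos φ := by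
      apply Real.cos_lt_cos_of_nonneg_of_le_pi (by linarith [hφ.1]) (by linarith [Real.pi_pos]) hφ.2
    have hlt1 : Real.cos b ^ 2 / Real.cos φ ^ 2 < 1 := by
      rw [div_lt_one (by positivity)]
      nlinarith
    have harc : 0 < Real.arcsin (Real.sqrt (1 - Real.cos b ^ 2 / Real.cos φ ^ 2)) := by
      rw [Real.arcsin_pos]
      apply Real.sqrt_pos.2
      linarith
    have hexp : Real.exp (-(μ / Real.pi) *
        Real.arcsin (Real.sqrt (1 - Real.cos b ^ 2 / Real.cos φ ^ 2))) < 1 := by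
      apply Real.exp_lt_one_iff.2
      nlinarith
    unfold gFun
    have : 0 < 1 - Real.exp (-(μ / Real.pi) *
        Real.arcsin (Real.sqrt (1 - Real.cos b ^ 2 / Real.cos φ ^ 2))) := by linarith
    positivity
  have step2 : (∫ φ in (0:ℝ)..a, gFun μ b φ) + (∫ φ in a..b, gFun μ b φ) =
      ∫ φ in (0:ℝ)..b, gFun μ b φ :=
    intervalIntegral.integral_add_adjacent_intervals intb1 intb2
  have hI : (∫ φ in (0:ℝ)..a, gFun μ a φ) < ∫ φ in (0:ℝ)..b, gFun μ b φ := by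
    rw [← step2]; linarith
  simp only
  have h1 : -lam * (∫ φ in (0:ℝ)..b, gFun μ b φ) < -lam * ∫ φ in (0:ℝ)..a, gFun μ a φ := by
    nlinarith
  have := Real.exp_lt_exp.2 h1
  show 1 - Real.exp (-lam * ∫ φ in (0:ℝ)..a, gFun μ a φ) <
    1 - Real.exp (-lam * ∫ φ in (0:ℝ)..b, gFun μ b φ)
  linarith
end

section
/- The function I : [0, π/2] → ℝ defined by I(a) = ∫_{0}^{a} cos(φ)·arcsin(sqrt(1 − cos²(a)/cos²(φ))) dφ is strictly increasing on [0, π/2]. In particular, for 0 ≤ ξ̄ < φ̄ ≤ π/2, the average number of effective satellites (λμ/π)·I(φ̄) with aerial platforms strictly exceeds the average number (λμ/π)·I(ξ̄) without aerial platforms. -/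
open Real MeasureTheory Set intervalIntegral

/-- Integrability of the integrand on subintervals of `[0, b]` with `b ≤ π/2`. -/
lemma sat_aux_int (b u v : ℝ) (hu : 0 ≤ u) (huv : u ≤ v) (hvb : v ≤ b)
    (hb : b ≤ Real.pi / 2) :
    IntervalIntegrable
      (fun φ => Real.cos φ * Real.arcsin (Real.sqrt (1 - Real.cos b ^ 2 / Real.cos φ ^ 2)))
      MeasureTheory.volume u v := by
  rcases lt_or_eq_of_le (hvb.trans hb) with hv | hv
  · apply ContinuousOn.intervalIntegrable
    rw [Set.uIcc_of_le huv]
    have hcont : ContinuousOn (fun φ : ℝ => 1 - Real.cos b ^ 2 / Real.cos φ ^ 2)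
        (Set.Icc u v) := by
      apply ContinuousOn.sub continuousOn_const
      apply ContinuousOn.div continuousOn_const (Continuous.continuousOn (by continuity))
      intro x hx
      have hc : 0 < Real.cos x := by
        apply Real.cos_pos_of_mem_Ioo
        constructor
        · have := Real.pi_pos; have := hx.1; simp only [neg_lt]; nlinarith
        · exact lt_of_le_of_lt hx.2 hv
      positivity
    exact Real.continuous_cos.continuousOn.mul
      (Real.continuous_arcsin.comp_continuousOn
        (Real.continuous_sqrt.comp_continuousOn hcont))
  · have hbv : b = Real.pi / 2 := le_antisymm hb (hv ▸ hvb)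
    subst hbv
    have heq : (fun φ : ℝ => Real.cos φ *
        Real.arcsin (Real.sqrt (1 - Real.cos (Real.pi/2) ^ 2 / Real.cos φ ^ 2)))
        = fun φ : ℝ => Real.cos φ * (Real.pi / 2) := by
      funext φ
      simp [Real.cos_pi_div_two, Real.arcsin_one]
    rw [heq]
    exact (Real.continuous_cos.mul continuous_const).intervalIntegrable u v

/-- The key strict inequality. -/
lemma sat_key (ξ φb : ℝ) (hξ : 0 ≤ ξ) (hlt : ξ < φb) (hφb : φb ≤ Real.pi / 2) :
    (∫ φ in (0:ℝ)..ξ,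
        Real.cos φ * Real.arcsin (Real.sqrt (1 - Real.cos ξ ^ 2 / Real.cos φ ^ 2)))
      < ∫ φ in (0:ℝ)..φb,
        Real.cos φ * Real.arcsin (Real.sqrt (1 - Real.cos φb ^ 2 / Real.cos φ ^ 2)) := by
  have hπ := Real.pi_pos
  have hξle : ξ ≤ Real.pi / 2 := le_of_lt (lt_of_lt_of_le hlt hφb)
  have hint1 : IntervalIntegrable
      (fun φ => Real.cos φ * Real.arcsin (Real.sqrt (1 - Real.cos ξ ^ 2 / Real.cos φ ^ 2)))
      MeasureTheory.volume 0 ξ := sat_aux_int ξ 0 ξ le_rfl hξ le_rfl hξle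
  have hint2 : IntervalIntegrable
      (fun φ => Real.cos φ * Real.arcsin (Real.sqrt (1 - Real.cos φb ^ 2 / Real.cos φ ^ 2)))
      MeasureTheory.volume 0 ξ := sat_aux_int φb 0 ξ le_rfl hξ (le_of_lt hlt) hφb
  have hint3 : IntervalIntegrable
      (fun φ => Real.cos φ * Real.arcsin (Real.sqrt (1 - Real.cos φb ^ 2 / Real.cos φ ^ 2)))
      MeasureTheory.volume ξ φb := sat_aux_int φb ξ φb hξ (le_of_lt hlt) le_rfl hφb
  -- pointwise comparison on [0, ξ]
  have hmono : (∫ φ in (0:ℝ)..ξ,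
        Real.cos φ * Real.arcsin (Real.sqrt (1 - Real.cos ξ ^ 2 / Real.cos φ ^ 2)))
      ≤ ∫ φ in (0:ℝ)..ξ,
        Real.cos φ * Real.arcsin (Real.sqrt (1 - Real.cos φb ^ 2 / Real.cos φ ^ 2)) := by
    apply intervalIntegral.integral_mono_on hξ hint1 hint2
    intro φ hφ
    have hcosφ : 0 ≤ Real.cos φ := by
      apply Real.cos_nonneg_of_mem_Icc
      constructor
      · linarith [hφ.1]
      · linarith [hφ.2]
    apply mul_le_mul_of_nonneg_left _ hcosφ
    apply Real.monotone_arcsin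
    apply Real.sqrt_le_sqrt
    have hcc : Real.cos φb ≤ Real.cos ξ := by
      apply Real.cos_le_cos_of_nonneg_of_le_pi hξ (by linarith) (le_of_lt hlt)
    have hcb : 0 ≤ Real.cos φb := by
      apply Real.cos_nonneg_of_mem_Icc; constructor <;> linarith
    have hsq : Real.cos φb ^ 2 ≤ Real.cos ξ ^ 2 := by nlinarith
    have hden : 0 ≤ Real.cos φ ^ 2 := sq_nonneg _
    have := div_le_div_of_nonneg_right hsq hden  -- may not exist with nonneg; fix below
    linarith [this]
  -- positivity on (ξ, φb)
  have hpos : 0 < ∫ φ in ξ..φb,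
      Real.cos φ * Real.arcsin (Real.sqrt (1 - Real.cos φb ^ 2 / Real.cos φ ^ 2)) := by
    apply intervalIntegral.intervalIntegral_pos_of_pos_on hint3 _ hlt
    intro φ hφ
    have hφ0 : 0 < φ := lt_of_le_of_lt hξ hφ.1
    have hφπ : φ < Real.pi / 2 := lt_of_lt_of_le hφ.2 hφb
    have hcosφ : 0 < Real.cos φ :=
      Real.cos_pos_of_mem_Ioo ⟨by linarith, hφπ⟩
    have hcb : 0 ≤ Real.cos φb := by
      apply Real.cos_nonneg_of_mem_Icc; constructor <;> linarith
    have hcc : Real.cos φb < Real.cos φ :=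
      Real.cos_lt_cos_of_nonneg_of_le_pi (le_of_lt hφ0) (by linarith) hφ.2
    have hsq : Real.cos φb ^ 2 < Real.cos φ ^ 2 := by nlinarith
    have harg : 0 < 1 - Real.cos φb ^ 2 / Real.cos φ ^ 2 := by
      have h1 : Real.cos φb ^ 2 / Real.cos φ ^ 2 < 1 := by
        rw [div_lt_one (by positivity)]; exact hsq
      linarith
    have : 0 < Real.arcsin (Real.sqrt (1 - Real.cos φb ^ 2 / Real.cos φ ^ 2)) := by
      apply Real.arcsin_pos.mpr
      exact Real.sqrt_pos.mpr harg
    positivity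
  have hsplit : (∫ φ in (0:ℝ)..ξ,
        Real.cos φ * Real.arcsin (Real.sqrt (1 - Real.cos φb ^ 2 / Real.cos φ ^ 2)))
      + (∫ φ in ξ..φb,
        Real.cos φ * Real.arcsin (Real.sqrt (1 - Real.cos φb ^ 2 / Real.cos φ ^ 2)))
      = ∫ φ in (0:ℝ)..φb,
        Real.cos φ * Real.arcsin (Real.sqrt (1 - Real.cos φb ^ 2 / Real.cos φ ^ 2)) :=
    intervalIntegral.integral_add_adjacent_intervals hint2 hint3
  linarith

/-- The effective-satellite integral of Theorem 1 is strictly increasing in the cap angle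
on `[0, π/2]`; in particular, with aerial platforms (cap angle `φ̄`) the average number of
effective satellites `(λμ/π)·I(φ̄)` strictly exceeds the number `(λμ/π)·I(ξ̄)` without
aerial platforms, whenever `0 ≤ ξ̄ < φ̄ ≤ π/2`. -/
theorem effective_satellites_strictMono (lam μ : ℝ) (hlam : 0 < lam) (hμ : 0 < μ) :
    StrictMonoOn (fun a : ℝ => ∫ φ in (0:ℝ)..a,
        Real.cos φ * Real.arcsin (Real.sqrt (1 - Real.cos a ^ 2 / Real.cos φ ^ 2)))
      (Set.Icc 0 (Real.pi / 2))
    ∧ ∀ ξ φb : ℝ, 0 ≤ ξ → ξ < φb → φb ≤ Real.pi / 2 →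
        (lam * μ / Real.pi) * (∫ φ in (0:ℝ)..ξ,
            Real.cos φ * Real.arcsin (Real.sqrt (1 - Real.cos ξ ^ 2 / Real.cos φ ^ 2)))
          < (lam * μ / Real.pi) * (∫ φ in (0:ℝ)..φb,
              Real.cos φ * Real.arcsin (Real.sqrt (1 - Real.cos φb ^ 2 / Real.cos φ ^ 2))) := by
  constructor
  · intro a ha b hb hab
    exact sat_key a b ha.1 hab hb.2
  · intro ξ φb h1 h2 h3
    have hc : 0 < lam * μ / Real.pi := div_pos (mul_pos hlam hμ) Real.pi_pos
    exact mul_lt_mul_of_pos_left (sat_key ξ φb h1 h2 h3) hc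
end
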